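/- Let G be a group, S ⊆ G a finite subset, ε ∈ (0,1] and M ≥ 1. Suppose f : G → [0,∞) is a finitely supported function with Σ_{γ∈G} f(γ)² = 1, Σ_{γ∈G} f(γ) ≤ M, and Σ_{γ∈G} (f(γ) − f(γs))² ≤ ε² for every s ∈ S. Then there exists a function g : G → [0,∞) with Σ_{γ∈G} g(γ)² = 1, Σ_{γ∈G} (g(γ) − g(γs))² ≤ (2ε)² for every s ∈ S, and the support of g has cardinality at most 4M²(1+ε)²/ε². -/

import Mathlib

theorem stmt_2 {G : Type*} [Group G] (S : Finset G) (ε M : ℝ)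
    (hε0 : 0 < ε) (hε1 : ε ≤ 1) (hM : 1 ≤ M) (f : G → ℝ)
    (hf0 : ∀ γ, 0 ≤ f γ) (hsupp : (Function.support f).Finite)
    (hl2 : ∑' γ, f γ ^ 2 = 1) (hl1 : ∑' γ, f γ ≤ M)
    (hinv : ∀ s ∈ S, ∑' γ, (f γ - f (γ * s)) ^ 2 ≤ ε ^ 2) :
    ∃ g : G → ℝ, (∀ γ, 0 ≤ g γ) ∧ (∑' γ, g γ ^ 2 = 1) ∧
      (∀ s ∈ S, ∑' γ, (g γ - g (γ * s)) ^ 2 ≤ (2 * ε) ^ 2) ∧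
      (Function.support g).Finite ∧
      (Nat.card (Function.support g) : ℝ) ≤ 4 * M ^ 2 * (1 + ε) ^ 2 / ε ^ 2 := by
  classical
  have hM0 : (0:ℝ) < M := lt_of_lt_of_le one_pos hM
  set δ : ℝ := ε^2/(4*M*(1+ε)^2) with hδdef
  have hδ0 : 0 < δ := by positivity
  set F : G → ℝ := fun γ => max (f γ - δ) 0 with hFdef
  have hF0 : ∀ γ, 0 ≤ F γ := fun γ => le_max_right _ _
  have hF0' : ∀ γ, f γ = 0 → F γ = 0 := by
    intro γ h
    simp only [hFdef, h, zero_sub]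
    exact max_eq_right (by linarith)
  set T : Finset G := hsupp.toFinset with hT
  have hfT : ∀ γ ∉ T, f γ = 0 := by
    intro γ hγ
    by_contra h
    exact hγ (hsupp.mem_toFinset.mpr h)
  have hFT : ∀ γ ∉ T, F γ = 0 := fun γ hγ => hF0' γ (hfT γ hγ)
  have hl2T : ∑ γ ∈ T, f γ ^ 2 = 1 := by
    rw [← hl2]
    exact (tsum_eq_sum (fun γ hγ => by rw [hfT γ hγ]; ring)).symm
  have hl1T : ∑ γ ∈ T, f γ ≤ M := by
    rw [← tsum_eq_sum (L := SummationFilter.unconditional G) (fun γ hγ => hfT γ hγ)]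
    exact hl1
  -- pointwise lower bound for F^2
  have hpt : ∀ γ, f γ ^ 2 - 2*δ*f γ ≤ F γ ^ 2 := by
    intro γ
    rcases le_or_gt (f γ) δ with h | h
    · have hFz : F γ = 0 := by
        simp only [hFdef]
        exact max_eq_right (by linarith)
      rw [hFz]
      nlinarith [hf0 γ]
    · have hFe : F γ = f γ - δ := max_eq_left (by linarith)
      rw [hFe]
      nlinarith
  set A : ℝ := ∑ γ ∈ T, F γ ^ 2 with hA
  have hA2 : (1:ℝ)/2 ≤ A := by
    have h1 : ∑ γ ∈ T, (f γ ^ 2 - 2*δ*f γ) ≤ A := Finset.sum_le_sum (fun γ _ => hpt γ)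
    have h2 : ∑ γ ∈ T, (f γ ^ 2 - 2*δ*f γ) = 1 - 2*δ*(∑ γ ∈ T, f γ) := by
      rw [Finset.sum_sub_distrib, ← Finset.mul_sum, hl2T]
    have h3 : 2*δ*(∑ γ ∈ T, f γ) ≤ 2*δ*M :=
      mul_le_mul_of_nonneg_left hl1T (by positivity)
    have h4 : 2*δ*M ≤ 1/2 := by
      have hδM : 2*δ*M = ε^2/(2*(1+ε)^2) := by
        rw [hδdef]
        field_simp
        ring
      rw [hδM, div_le_iff₀ (by positivity)]
      nlinarith
    linarith
  have hA0 : 0 < A := by linarith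
  set N : ℝ := Real.sqrt A with hN
  have hN0 : 0 < N := Real.sqrt_pos.mpr hA0
  have hN2 : N^2 = A := Real.sq_sqrt (le_of_lt hA0)
  -- support of F
  have hFsub : Function.support F ⊆ Function.support f := by
    intro γ hγ
    simp only [Function.mem_support] at hγ ⊢
    intro h
    exact hγ (hF0' γ h)
  have hFfin : (Function.support F).Finite := hsupp.subset hFsub
  have hsup_eq : Function.support (fun γ => F γ / N) = Function.support F := by
    ext γ
    simp [Function.mem_support, div_eq_zero_iff, hN0.ne']
  refine ⟨fun γ => F γ / N, fun γ => div_nonneg (hF0 γ) hN0.le, ?_, ?_, ?_, ?_⟩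
  · -- l2 norm 1
    rw [tsum_eq_sum (s := T) (fun γ hγ => by simp [hFT γ hγ])]
    have : ∀ γ ∈ T, (F γ / N)^2 = F γ ^ 2 / A := by
      intro γ _
      rw [div_pow, hN2]
    rw [Finset.sum_congr rfl this, ← Finset.sum_div, ← hA, div_self hA0.ne']
  · -- almost invariance
    intro s hs
    set Ts : Finset G := T ∪ T.image (fun γ => γ * s⁻¹) with hTs
    have hmem : ∀ γ ∉ Ts, f γ = 0 ∧ f (γ * s) = 0 := by
      intro γ hγ
      rw [hTs, Finset.mem_union, not_or] at hγ
      refine ⟨hfT γ hγ.1, hfT _ ?_⟩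
      intro hc
      exact hγ.2 (Finset.mem_image.mpr ⟨γ * s, hc, by group⟩)
    have hFmem : ∀ γ ∉ Ts, F γ = 0 ∧ F (γ * s) = 0 := fun γ hγ =>
      ⟨hF0' γ (hmem γ hγ).1, hF0' _ (hmem γ hγ).2⟩
    have hsum_f : ∑' γ, (f γ - f (γ*s))^2 = ∑ γ ∈ Ts, (f γ - f (γ*s))^2 :=
      tsum_eq_sum (fun γ hγ => by rw [(hmem γ hγ).1, (hmem γ hγ).2]; ring)
    have hf2 : ∑ γ ∈ Ts, (f γ - f (γ*s))^2 ≤ ε^2 := hsum_f ▸ hinv s hs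
    have hle : ∑ γ ∈ Ts, (F γ - F (γ*s))^2 ≤ ∑ γ ∈ Ts, (f γ - f (γ*s))^2 := by
      apply Finset.sum_le_sum
      intro γ _
      have h1 : |F γ - F (γ*s)| ≤ |f γ - f (γ*s)| := by
        have h := abs_max_sub_max_le_abs (f γ - δ) (f (γ * s) - δ) 0
        rwa [sub_sub_sub_cancel_right] at h
      calc (F γ - F (γ*s))^2 = |F γ - F (γ*s)|^2 := (sq_abs _).symm
        _ ≤ |f γ - f (γ*s)|^2 := by
            apply pow_le_pow_left₀ (abs_nonneg _) h1
        _ = (f γ - f (γ*s))^2 := sq_abs _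
    have heq : ∑' γ, (F γ / N - F (γ*s)/N)^2 = (∑ γ ∈ Ts, (F γ - F (γ*s))^2)/A := by
      have hterm : ∀ γ ∈ Ts, (F γ / N - F (γ*s)/N)^2 = (F γ - F (γ*s))^2 / A := by
        intro γ _
        rw [div_sub_div_same, div_pow, hN2]
      rw [tsum_eq_sum (s := Ts)
        (fun γ hγ => by simp [(hFmem γ hγ).1, (hFmem γ hγ).2]),
        Finset.sum_congr rfl hterm, ← Finset.sum_div]
    rw [heq, div_le_iff₀ hA0]
    nlinarith [sq_nonneg ε]
  · rw [hsup_eq]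
    exact hFfin
  · rw [hsup_eq]
    have hcardeq : (Nat.card (Function.support F) : ℝ) = hFfin.toFinset.card := by
      rw [Nat.card_coe_set_eq, Set.ncard_eq_toFinset_card _ hFfin]
    rw [hcardeq]
    have hsubT : hFfin.toFinset ⊆ T := by
      intro γ hγ
      rw [hsupp.mem_toFinset]
      exact hFsub (hFfin.mem_toFinset.mp hγ)
    have hcard : (hFfin.toFinset.card : ℝ) * δ ≤ M := by
      calc (hFfin.toFinset.card : ℝ) * δ = ∑ _γ ∈ hFfin.toFinset, δ := by
            rw [Finset.sum_const, nsmul_eq_mul]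
        _ ≤ ∑ γ ∈ hFfin.toFinset, f γ := by
            apply Finset.sum_le_sum
            intro γ hγ
            have hFne : F γ ≠ 0 := hFfin.mem_toFinset.mp hγ
            rcases le_or_gt (f γ) δ with h | h
            · exact absurd (max_eq_right (by linarith : f γ - δ ≤ 0)) hFne
            · linarith
        _ ≤ ∑ γ ∈ T, f γ :=
            Finset.sum_le_sum_of_subset_of_nonneg hsubT (fun γ _ _ => hf0 γ)
        _ ≤ M := hl1T
    have hMδ : M / δ = 4*M^2*(1+ε)^2/ε^2 := by
      rw [hδdef]
      field_simp
    rw [← hMδ, le_div_iff₀ hδ0]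
    exact hcard
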